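/- Uniqueness of the maximum-entropy factorized distribution: if q₁ and q₂ are pmfs on a finite product space, both with full support, both factoring over the same family of blocks C with strictly positive potentials, and both having the same block marginals for all c ∈ C, then q₁ = q₂. -/

import Mathlib

/-- Uniqueness of the maximum-entropy factorized distribution: two full-support
pmfs that both factor over the same family of blocks with strictly positive
potentials and have the same block marginals must be equal. -/
theorem stmt_19 {I V : Type*} [Fintype I] [DecidableEq I] [Fintype V] [DecidableEq V]
    (C : Finset (Finset I))
    (q₁ q₂ : (I → V) → ℝ)
    (hq₁0 : ∀ x, 0 < q₁ x) (hq₁1 : ∑ x, q₁ x = 1)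
    (hq₂0 : ∀ x, 0 < q₂ x) (hq₂1 : ∑ x, q₂ x = 1)
    (φ₁ φ₂ : Finset I → (I → V) → ℝ)
    (hφ₁pos : ∀ c ∈ C, ∀ x, 0 < φ₁ c x)
    (hφ₂pos : ∀ c ∈ C, ∀ x, 0 < φ₂ c x)
    (hφ₁loc : ∀ c ∈ C, ∀ x y : I → V, (∀ i ∈ c, x i = y i) → φ₁ c x = φ₁ c y)
    (hφ₂loc : ∀ c ∈ C, ∀ x y : I → V, (∀ i ∈ c, x i = y i) → φ₂ c x = φ₂ c y)
    (hfact₁ : ∀ x, q₁ x = ∏ c ∈ C, φ₁ c x)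
    (hfact₂ : ∀ x, q₂ x = ∏ c ∈ C, φ₂ c x)
    (hmarg : ∀ c ∈ C, ∀ x : I → V,
      (∑ y ∈ Finset.univ.filter (fun y => ∀ i ∈ c, y i = x i), q₁ y) =
        ∑ y ∈ Finset.univ.filter (fun y => ∀ i ∈ c, y i = x i), q₂ y) :
    q₁ = q₂ := by
  -- the state space is nonempty
  have hne : Nonempty (I → V) := by
    by_contra h
    haveI : IsEmpty (I → V) := not_nonempty_iff.mp h
    simp at hq₁1
  obtain ⟨x₀⟩ := hne
  set F : Finset I → (I → V) → ℝ :=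
    fun c x => Real.log (φ₁ c x) - Real.log (φ₂ c x) with hF
  -- F c is local on c
  have hFloc : ∀ c ∈ C, ∀ x y : I → V, (∀ i ∈ c, x i = y i) → F c x = F c y := by
    intro c hc x y hxy
    simp only [hF, hφ₁loc c hc x y hxy, hφ₂loc c hc x y hxy]
  -- log ratio decomposes as a sum of local functions
  have hlog : ∀ x, Real.log (q₁ x) - Real.log (q₂ x) = ∑ c ∈ C, F c x := by
    intro x
    rw [hfact₁ x, hfact₂ x,
      Real.log_prod (fun c hc => (hφ₁pos c hc x).ne'),
      Real.log_prod (fun c hc => (hφ₂pos c hc x).ne'),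
      ← Finset.sum_sub_distrib]
  -- key cancellation: for any local function, expectations against q₁ and q₂ agree
  have key : ∀ c ∈ C, ∑ x : I → V, (q₁ x - q₂ x) * F c x = 0 := by
    intro c hc
    set κ : (I → V) → (I → V) := fun x i => if i ∈ c then x i else x₀ i with hκ
    have hκmem : ∀ x : I → V, x ∈ Finset.univ → κ x ∈ Finset.univ.image κ := by
      intro x _; exact Finset.mem_image_of_mem _ (Finset.mem_univ x)
    rw [← Finset.sum_fiberwise_of_maps_to hκmem]
    apply Finset.sum_eq_zero
    intro z hz
    obtain ⟨w, -, hw⟩ := Finset.mem_image.mp hz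
    have hfib : (Finset.univ.filter fun x => κ x = z) =
        (Finset.univ.filter fun y => ∀ i ∈ c, y i = z i) := by
      apply Finset.filter_congr
      intro y _
      constructor
      · intro h i hi
        have := congrFun h i
        simpa [hκ, hi] using this
      · intro h
        funext i
        by_cases hi : i ∈ c
        · simpa [hκ, hi] using h i hi
        · have : z i = x₀ i := by
            rw [← hw]; simp [hκ, hi]
          simp [hκ, hi, this]
    have hFz : ∀ y ∈ Finset.univ.filter fun x => κ x = z, F c y = F c z := by
      intro y hy
      have hyz : κ y = z := (Finset.mem_filter.mp hy).2
      have : ∀ i ∈ c, y i = z i := by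
        intro i hi
        have := congrFun hyz i
        simpa [hκ, hi] using this
      exact hFloc c hc y z this
    calc ∑ x ∈ Finset.univ.filter fun x => κ x = z, (q₁ x - q₂ x) * F c x
        = ∑ x ∈ Finset.univ.filter fun x => κ x = z, (q₁ x - q₂ x) * F c z := by
          apply Finset.sum_congr rfl
          intro y hy; rw [hFz y hy]
      _ = (∑ x ∈ Finset.univ.filter fun x => κ x = z, (q₁ x - q₂ x)) * F c z := by
          rw [Finset.sum_mul]
      _ = 0 := by
          rw [Finset.sum_sub_distrib, hfib, hmarg c hc z, sub_self, zero_mul]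
  -- the total "symmetrized KL" is zero
  have hS : ∑ x : I → V, (q₁ x - q₂ x) * (Real.log (q₁ x) - Real.log (q₂ x)) = 0 := by
    calc ∑ x : I → V, (q₁ x - q₂ x) * (Real.log (q₁ x) - Real.log (q₂ x))
        = ∑ x : I → V, ∑ c ∈ C, (q₁ x - q₂ x) * F c x := by
          apply Finset.sum_congr rfl
          intro x _
          rw [hlog x, Finset.mul_sum]
      _ = ∑ c ∈ C, ∑ x : I → V, (q₁ x - q₂ x) * F c x := Finset.sum_comm
      _ = 0 := Finset.sum_eq_zero key
  -- each summand is nonnegative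
  have hnn : ∀ x : I → V,
      0 ≤ (q₁ x - q₂ x) * (Real.log (q₁ x) - Real.log (q₂ x)) := by
    intro x
    rcases le_total (q₁ x) (q₂ x) with h | h
    · have := Real.log_le_log (hq₁0 x) h
      nlinarith
    · exact mul_nonneg (by linarith)
        (sub_nonneg.mpr (Real.log_le_log (hq₂0 x) h))
  have hzero := (Finset.sum_eq_zero_iff_of_nonneg
    (fun x _ => hnn x)).mp hS
  funext x
  by_contra hxy
  have hx := hzero x (Finset.mem_univ x)
  rcases lt_or_gt_of_ne hxy with h | h
  · have hlt : Real.log (q₁ x) < Real.log (q₂ x) :=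
      Real.log_lt_log (hq₁0 x) h
    nlinarith [hx]
  · have hlt : Real.log (q₂ x) < Real.log (q₁ x) :=
      Real.log_lt_log (hq₂0 x) h
    nlinarith [hx]
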